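/- (Relation (b) between the HP-integral and the GHP-integral.) Let m ≥ 3 and fix i ≠ j. There exists a constant C > 0 depending only on the priors p_1,…,p_m (and not on the densities) such that HP(f_i, f_j) ≤ GHP^m(f_i, f_j) + C·(1 − D), where 1 − D = (1/((p_i+p_j)(1 − p_i − p_j))) ∫ (p_i f_i(x) + p_j f_j(x))·(Σ_{k≠i,j} p_k f_k(x))/f^(m)(x) dx is the complement of the Henze–Penrose divergence, with weights (p_i+p_j, 1−p_i−p_j), between the normalized mixture p̃_ij f_i + p̃_ji f_j and the normalized mixture Σ_{k≠i,j} p̃_k^{ij} f_k, where p̃_ij = p_i/(p_i+p_j), p̃_ji = p_j/(p_i+p_j), and p̃_k^{ij} = p_k/Σ_{r≠i,j} p_r. -/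

import Mathlib

open MeasureTheory Finset

/-- The mixture density `f⁽ᵐ⁾(x) = ∑ₖ pₖ fₖ(x)`. -/
noncomputable def mixture {m d : ℕ} (p : Fin m → ℝ) (f : Fin m → (Fin d → ℝ) → ℝ)
    (x : Fin d → ℝ) : ℝ :=
  ∑ k, p k * f k x

/-- The multi-class Bayes error rate `ε^m = 1 - ∫ max_k pₖ fₖ(x) dx`. -/
noncomputable def bayesError {m d : ℕ} (p : Fin m → ℝ) (f : Fin m → (Fin d → ℝ) → ℝ) : ℝ :=
  1 - ∫ x : Fin d → ℝ, ⨆ k, p k * f k x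

/-- `δ^m_ij = ∫ pᵢ pⱼ fᵢ(x) fⱼ(x) / f⁽ᵐ⁾(x) dx` (integrand `0` where the denominator is `0`). -/
noncomputable def deltaGHP {m d : ℕ} (p : Fin m → ℝ) (f : Fin m → (Fin d → ℝ) → ℝ)
    (i j : Fin m) : ℝ :=
  ∫ x : Fin d → ℝ, p i * p j * f i x * f j x / mixture p f x

/-- `δ_ij = ∫ pᵢ pⱼ fᵢ(x) fⱼ(x) / (pᵢ fᵢ(x) + pⱼ fⱼ(x)) dx`
(integrand `0` where the denominator is `0`). -/
noncomputable def deltaPW {m d : ℕ} (p : Fin m → ℝ) (f : Fin m → (Fin d → ℝ) → ℝ)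
    (i j : Fin m) : ℝ :=
  ∫ x : Fin d → ℝ, p i * p j * f i x * f j x / (p i * f i x + p j * f j x)

theorem HP_le_GHP_add_const_mul_one_sub_HPdiv
    (m d : ℕ) (hm : 3 ≤ m) (hd : 1 ≤ d)
    (p : Fin m → ℝ) (hp : ∀ k, 0 < p k) (hp1 : ∑ k, p k = 1)
    (i j : Fin m) (hij : i ≠ j) :
    ∃ C : ℝ, 0 < C ∧
      ∀ f : Fin m → (Fin d → ℝ) → ℝ,
        (∀ k, Measurable (f k)) →
        (∀ k x, 0 ≤ f k x) →
        (∀ k, ∫ x : Fin d → ℝ, f k x = 1) →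
        Integrable (fun x : Fin d → ℝ =>
          f i x * f j x / (p i * f i x + p j * f j x)) →
        (∫ x : Fin d → ℝ, f i x * f j x / (p i * f i x + p j * f j x)) ≤
          (∫ x : Fin d → ℝ, f i x * f j x / mixture p f x) +
            C * (1 / ((p i + p j) * (1 - p i - p j)) *
              ∫ x : Fin d → ℝ,
                (p i * f i x + p j * f j x) *
                  (∑ k ∈ Finset.univ.filter (fun k => k ≠ i ∧ k ≠ j), p k * f k x) /
                  mixture p f x) := by

  -- there is a third class
  have hcompl : (({i, j} : Finset (Fin m))ᶜ).Nonempty := by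
    rw [← Finset.card_pos, Finset.card_compl]
    have h2 : ({i, j} : Finset (Fin m)).card ≤ 2 := by
      apply le_trans (Finset.card_insert_le i {j}); simp
    simp only [Fintype.card_fin]
    omega
  obtain ⟨k, hk⟩ := hcompl
  simp only [Finset.mem_compl, Finset.mem_insert, Finset.mem_singleton, not_or] at hk
  obtain ⟨hki, hkj⟩ := hk
  have hpi := hp i
  have hpj := hp j
  have hijk : p i + p j + p k ≤ 1 := by
    rw [← hp1]
    have hsum : ∑ r ∈ ({i, j, k} : Finset (Fin m)), p r = p i + p j + p k := by
      rw [Finset.sum_insert (by simp [hij, Ne.symm hki]),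
        Finset.sum_insert (by simp [Ne.symm hkj]), Finset.sum_singleton]
      ring
    rw [← hsum]
    exact Finset.sum_le_sum_of_subset_of_nonneg (Finset.subset_univ _)
      (fun r _ _ => (hp r).le)
  have hlt1 : p i + p j < 1 := by have := hp k; linarith
  have hD : 0 < (p i + p j) * (1 - p i - p j) := mul_pos (by linarith) (by linarith)
  refine ⟨(p i + p j) * (1 - p i - p j) / (4 * p i * p j), by positivity, ?_⟩
  intro f hf hf0 hf1 hgint
  set c : ℝ := 1 / (4 * p i * p j) with hc
  have hcpos : 0 < c := by positivity
  -- integrability of each density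
  have hint : ∀ l, Integrable (f l) := by
    intro l
    by_contra h
    have := hf1 l
    rw [MeasureTheory.integral_undef h] at this
    exact one_ne_zero this.symm
  -- the three integrands
  set g : (Fin d → ℝ) → ℝ :=
    fun x => f i x * f j x / (p i * f i x + p j * f j x) with hg
  set h1 : (Fin d → ℝ) → ℝ := fun x => f i x * f j x / mixture p f x with hh1
  set h2 : (Fin d → ℝ) → ℝ := fun x =>
    (p i * f i x + p j * f j x) *
      (∑ l ∈ Finset.univ.filter (fun l => l ≠ i ∧ l ≠ j), p l * f l x) /
      mixture p f x with hh2
  -- split of the mixture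
  have hmixsplit : ∀ x, mixture p f x = (p i * f i x + p j * f j x) +
      ∑ l ∈ Finset.univ.filter (fun l => l ≠ i ∧ l ≠ j), p l * f l x := by
    intro x
    rw [mixture, ← Finset.sum_filter_add_sum_filter_not Finset.univ
      (fun l => l ≠ i ∧ l ≠ j) (fun l => p l * f l x)]
    have hfilt : (Finset.univ.filter (fun l : Fin m => ¬(l ≠ i ∧ l ≠ j))) = {i, j} := by
      ext l
      simp only [Finset.mem_filter, Finset.mem_univ, true_and, Finset.mem_insert,
        Finset.mem_singleton]
      push_neg
      constructor
      · intro h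
        by_cases hli : l = i
        · exact Or.inl hli
        · exact Or.inr (h hli)
      · rintro (rfl | rfl) h
        · exact absurd rfl h
        · rfl
    rw [hfilt, Finset.sum_pair hij]
    ring
  have hrnn : ∀ x, 0 ≤ ∑ l ∈ Finset.univ.filter (fun l => l ≠ i ∧ l ≠ j), p l * f l x :=
    fun x => Finset.sum_nonneg fun l _ => mul_nonneg (hp l).le (hf0 l x)
  have hsnn : ∀ x, 0 ≤ p i * f i x + p j * f j x := fun x =>
    add_nonneg (mul_nonneg hpi.le (hf0 i x)) (mul_nonneg hpj.le (hf0 j x))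
  have hmnn : ∀ x, 0 ≤ mixture p f x := fun x => by
    rw [hmixsplit x]; exact add_nonneg (hsnn x) (hrnn x)
  have hsm : ∀ x, p i * f i x + p j * f j x ≤ mixture p f x := fun x => by
    rw [hmixsplit x]; linarith [hrnn x]
  -- zero numerator when the pairwise denominator vanishes
  have hfi0 : ∀ x, p i * f i x + p j * f j x = 0 → f i x = 0 := by
    intro x hsx
    have h1' : p i * f i x = 0 := by
      have := mul_nonneg hpi.le (hf0 i x)
      have := mul_nonneg hpj.le (hf0 j x)
      linarith
    rcases mul_eq_zero.mp h1' with h | h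
    · exact absurd h hpi.ne'
    · exact h
  -- measurability
  have hmeas_r : Measurable (fun x =>
      ∑ l ∈ Finset.univ.filter (fun l => l ≠ i ∧ l ≠ j), p l * f l x) :=
    Finset.measurable_sum _ (fun l _ => (hf l).const_mul _)
  have hmeas_s : Measurable (fun x => p i * f i x + p j * f j x) :=
    ((hf i).const_mul _).add ((hf j).const_mul _)
  have hmeas_mix : Measurable (mixture p f) :=
    Finset.measurable_sum _ (fun l _ => (hf l).const_mul _)
  have hmeas_h1 : Measurable h1 := ((hf i).mul (hf j)).div hmeas_mix
  have hmeas_h2 : Measurable h2 := (hmeas_s.mul hmeas_r).div hmeas_mix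
  -- nonnegativity of integrands
  have hgnn : ∀ x, 0 ≤ g x := fun x =>
    div_nonneg (mul_nonneg (hf0 i x) (hf0 j x)) (hsnn x)
  have hh1nn : ∀ x, 0 ≤ h1 x := fun x =>
    div_nonneg (mul_nonneg (hf0 i x) (hf0 j x)) (hmnn x)
  have hh2nn : ∀ x, 0 ≤ h2 x := fun x =>
    div_nonneg (mul_nonneg (hsnn x) (hrnn x)) (hmnn x)
  -- h1 ≤ g pointwise
  have hh1le : ∀ x, h1 x ≤ g x := by
    intro x
    by_cases hsx : p i * f i x + p j * f j x = 0
    · simp [hh1, hg, hfi0 x hsx]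
    · have hspos : 0 < p i * f i x + p j * f j x :=
        lt_of_le_of_ne (hsnn x) (Ne.symm hsx)
      have hmpos : 0 < mixture p f x := lt_of_lt_of_le hspos (hsm x)
      simp only [hh1, hg]
      rw [div_le_div_iff₀ hmpos hspos]
      have := mul_nonneg (hf0 i x) (hf0 j x)
      nlinarith [hsm x]
  -- h2 ≤ s pointwise
  have hh2le : ∀ x, h2 x ≤ p i * f i x + p j * f j x := by
    intro x
    by_cases hmx : mixture p f x = 0
    · have hsx : p i * f i x + p j * f j x = 0 :=
        le_antisymm (hmx ▸ hsm x) (hsnn x)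
      simp [hh2, hsx]
    · have hmpos : 0 < mixture p f x := lt_of_le_of_ne (hmnn x) (Ne.symm hmx)
      simp only [hh2]
      rw [div_le_iff₀ hmpos]
      have hrm : (∑ l ∈ Finset.univ.filter (fun l => l ≠ i ∧ l ≠ j), p l * f l x)
          ≤ mixture p f x := by rw [hmixsplit x]; linarith [hsnn x]
      exact mul_le_mul_of_nonneg_left hrm (hsnn x)
  -- integrability
  have hs_int : Integrable (fun x => p i * f i x + p j * f j x) :=
    ((hint i).const_mul _).add ((hint j).const_mul _)
  have hh1_int : Integrable h1 := by
    apply Integrable.mono' hgint hmeas_h1.aestronglyMeasurable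
    filter_upwards with x
    rw [Real.norm_eq_abs, abs_of_nonneg (hh1nn x)]
    exact hh1le x
  have hh2_int : Integrable h2 := by
    apply Integrable.mono' hs_int hmeas_h2.aestronglyMeasurable
    filter_upwards with x
    rw [Real.norm_eq_abs, abs_of_nonneg (hh2nn x)]
    exact hh2le x
  -- pointwise main inequality : g ≤ h1 + c * h2
  have hpt : ∀ x, g x ≤ h1 x + c * h2 x := by
    intro x
    by_cases hsx : p i * f i x + p j * f j x = 0
    · have : g x = 0 := by simp [hg, hfi0 x hsx]
      rw [this]
      exact add_nonneg (hh1nn x) (mul_nonneg hcpos.le (hh2nn x))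
    · have hspos : 0 < p i * f i x + p j * f j x :=
        lt_of_le_of_ne (hsnn x) (Ne.symm hsx)
      have hmpos : 0 < mixture p f x := lt_of_lt_of_le hspos (hsm x)
      have hab : f i x * f j x ≤ c * (p i * f i x + p j * f j x)^2 := by
        rw [hc, one_div, inv_mul_eq_div, le_div_iff₀ (by positivity)]
        nlinarith [sq_nonneg (p i * f i x - p j * f j x),
          mul_nonneg (hf0 i x) (hf0 j x)]
      have hrw : h1 x + c * h2 x = (f i x * f j x + c *
          ((p i * f i x + p j * f j x) *
            (∑ l ∈ Finset.univ.filter (fun l => l ≠ i ∧ l ≠ j), p l * f l x))) /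
          mixture p f x := by
        simp only [hh1, hh2]; ring
      rw [hrw]
      simp only [hg]
      rw [div_le_div_iff₀ hspos hmpos]
      have hkey : f i x * f j x *
          (∑ l ∈ Finset.univ.filter (fun l => l ≠ i ∧ l ≠ j), p l * f l x)
          ≤ c * (p i * f i x + p j * f j x)^2 *
          (∑ l ∈ Finset.univ.filter (fun l => l ≠ i ∧ l ≠ j), p l * f l x) :=
        mul_le_mul_of_nonneg_right hab (hrnn x)
      rw [hmixsplit x]
      nlinarith [hkey]
  -- integrate the pointwise inequality
  have main : (∫ x, g x) ≤ (∫ x, h1 x) + c * ∫ x, h2 x := by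
    have h3 : (∫ x, g x) ≤ ∫ x, (h1 x + c * h2 x) := by
      apply integral_mono hgint (hh1_int.add (hh2_int.const_mul c))
      exact hpt
    rwa [integral_add hh1_int (hh2_int.const_mul c), MeasureTheory.integral_const_mul] at h3
  -- rewrite the constant
  have hCc : (p i + p j) * (1 - p i - p j) / (4 * p i * p j) *
      (1 / ((p i + p j) * (1 - p i - p j)) * ∫ x, h2 x) = c * ∫ x, h2 x := by
    rw [hc]
    field_simp
    have ha : (1 - p i - p j) ≠ 0 := by linarith
    linear_combination (∫ x, h2 x) * (mul_inv_cancel₀ ha)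
  calc (∫ x : Fin d → ℝ, f i x * f j x / (p i * f i x + p j * f j x))
      = ∫ x, g x := by simp only [hg]
    _ ≤ (∫ x, h1 x) + c * ∫ x, h2 x := main
    _ = (∫ x : Fin d → ℝ, f i x * f j x / mixture p f x) +
        (p i + p j) * (1 - p i - p j) / (4 * p i * p j) *
        (1 / ((p i + p j) * (1 - p i - p j)) *
          ∫ x : Fin d → ℝ, (p i * f i x + p j * f j x) *
            (∑ l ∈ Finset.univ.filter (fun l => l ≠ i ∧ l ≠ j), p l * f l x) /
            mixture p f x) := by
        rw [hCc]
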